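/- The kernel k := { ζ ∈ gl(V) : (u.ζ)_{N⊗L*} = 0 for all u in the universal enveloping algebra of g_- } is a g-submodule of gl(V): for every ξ ∈ g and ζ ∈ k, [ξ, ζ] ∈ k. -/

import Mathlib

attribute [local instance 100] LieRing.ofAssociativeRing

/-- The kernel `k ⊆ gl(V)`: all `ζ` such that for every `u ∈ U(g_-)` (represented by a
finite list of elements of `g_-` acting on `gl(V)` by iterated commutators), the component
of `u.ζ` in `Hom(L, N)` vanishes, i.e. `(u.ζ)(L) ⊆ L ⊕ T`. -/
def fubiniKernel {g V : Type*} [LieRing g] [LieAlgebra ℂ g]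
    [AddCommGroup V] [Module ℂ V]
    (ρ : g →ₗ⁅ℂ⁆ Module.End ℂ V) (gm : Submodule ℂ g) (L T : Submodule ℂ V) :
    Set (Module.End ℂ V) :=
  {ζ | ∀ xs : List g, (∀ x ∈ xs, x ∈ gm) →
    ∀ v ∈ L, (List.foldr (fun x acc => ⁅ρ x, acc⁆) ζ xs) v ∈ L ⊔ T}

/-- In the setup `g = g_- ⊕ p` with `p = g_{≥0}` the parabolic stabilizing
the highest weight line `L` (hence preserving both `L` and the filtrand `L ⊕ T`), the kernel
`k = { ζ ∈ gl(V) : (u.ζ)_{N⊗L*} = 0 for all u ∈ U(g_-) }` is a `g`-submodule of `gl(V)`: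
for every `ξ ∈ g` and `ζ ∈ k` one has `[ξ, ζ] ∈ k`. -/
lemma foldr_lie_add {g V : Type*} [LieRing g] [LieAlgebra ℂ g]
    [AddCommGroup V] [Module ℂ V] (ρ : g →ₗ⁅ℂ⁆ Module.End ℂ V)
    (xs : List g) (ζ₁ ζ₂ : Module.End ℂ V) :
    List.foldr (fun x acc => ⁅ρ x, acc⁆) (ζ₁ + ζ₂) xs
      = List.foldr (fun x acc => ⁅ρ x, acc⁆) ζ₁ xs
        + List.foldr (fun x acc => ⁅ρ x, acc⁆) ζ₂ xs := by
  induction xs with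
  | nil => rfl
  | cons y ys ih => simp [ih, lie_add]

lemma mem_fubiniKernel_lie_of_mem {g V : Type*} [LieRing g] [LieAlgebra ℂ g]
    [AddCommGroup V] [Module ℂ V] (ρ : g →ₗ⁅ℂ⁆ Module.End ℂ V)
    (gm : Submodule ℂ g) (L T : Submodule ℂ V)
    {y : g} (hy : y ∈ gm) {ζ : Module.End ℂ V} (hζ : ζ ∈ fubiniKernel ρ gm L T) :
    ⁅ρ y, ζ⁆ ∈ fubiniKernel ρ gm L T := by
  intro xs hxs v hv
  have h : List.foldr (fun x acc => ⁅ρ x, acc⁆) ⁅ρ y, ζ⁆ xs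
      = List.foldr (fun x acc => ⁅ρ x, acc⁆) ζ (xs ++ [y]) := by
    simp [List.foldr_append]
  rw [h]
  refine hζ _ ?_ v hv
  intro z hz
  rcases List.mem_append.mp hz with h' | h'
  · exact hxs z h'
  · simpa using List.mem_singleton.mp h' ▸ hy

lemma fubiniKernel_key {g V : Type*} [LieRing g] [LieAlgebra ℂ g]
    [AddCommGroup V] [Module ℂ V]
    (ρ : g →ₗ⁅ℂ⁆ Module.End ℂ V) (gm gp : Submodule ℂ g)
    (hsplit : gm ⊔ gp = ⊤) (L T : Submodule ℂ V)
    (hpL : ∀ x ∈ gp, ∀ v ∈ L, ρ x v ∈ L)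
    (hpLT : ∀ x ∈ gp, ∀ w ∈ L ⊔ T, ρ x w ∈ L ⊔ T) :
    ∀ xs : List g, (∀ x ∈ xs, x ∈ gm) →
      ∀ x ∈ gp, ∀ ζ ∈ fubiniKernel ρ gm L T, ∀ v ∈ L,
        (List.foldr (fun y acc => ⁅ρ y, acc⁆) ⁅ρ x, ζ⁆ xs) v ∈ L ⊔ T := by
  intro xs
  induction xs using List.reverseRecOn with
  | nil =>
    intro _ x hx ζ hζ v hv
    have h1 : ζ v ∈ L ⊔ T := hζ [] (by simp) v hv
    have h2 : ρ x v ∈ L := hpL x hx v hv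
    have h3 : ζ (ρ x v) ∈ L ⊔ T := hζ [] (by simp) _ h2
    simpa using (L ⊔ T).sub_mem (hpLT x hx _ h1) h3
  | append_singleton ys y ih =>
    intro hmem x hx ζ hζ v hv
    have hy : y ∈ gm := hmem y (by simp)
    have hys : ∀ z ∈ ys, z ∈ gm := fun z hz => hmem z (by simp [hz])
    have hrw : List.foldr (fun y acc => ⁅ρ y, acc⁆) ⁅ρ x, ζ⁆ (ys ++ [y])
        = List.foldr (fun y acc => ⁅ρ y, acc⁆) ⁅ρ y, ⁅ρ x, ζ⁆⁆ ys := by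
      simp [List.foldr_append]
    rw [hrw]
    have hjac : ⁅ρ y, ⁅ρ x, ζ⁆⁆ = ⁅ρ x, ⁅ρ y, ζ⁆⁆ + ⁅ρ ⁅y, x⁆, ζ⁆ := by
      have h := leibniz_lie (ρ y) (ρ x) ζ
      rw [h, ← LieHom.map_lie]
      abel
    rw [hjac, foldr_lie_add]
    simp only [LinearMap.add_apply]
    refine (L ⊔ T).add_mem ?_ ?_
    · exact ih hys x hx ⁅ρ y, ζ⁆ (mem_fubiniKernel_lie_of_mem ρ gm L T hy hζ) v hv
    · -- split ⁅y, x⁆ = a + b with a ∈ gm, b ∈ gp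
      have hmem' : (⁅y, x⁆ : g) ∈ gm ⊔ gp := by rw [hsplit]; trivial
      rcases Submodule.mem_sup.mp hmem' with ⟨a, ha, b, hb, hab⟩
      have hρ : ρ ⁅y, x⁆ = ρ a + ρ b := by rw [← hab]; exact ρ.map_add a b
      have hsplitlie : ⁅ρ ⁅y, x⁆, ζ⁆ = ⁅ρ a, ζ⁆ + ⁅ρ b, ζ⁆ := by
        rw [hρ, add_lie]
      rw [hsplitlie, foldr_lie_add]
      simp only [LinearMap.add_apply]
      refine (L ⊔ T).add_mem ?_ ?_
      · exact mem_fubiniKernel_lie_of_mem ρ gm L T ha hζ ys hys v hv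
      · exact ih hys b hb ζ hζ v hv

theorem stmt3 {g V : Type*} [LieRing g] [LieAlgebra ℂ g]
    [AddCommGroup V] [Module ℂ V]
    (ρ : g →ₗ⁅ℂ⁆ Module.End ℂ V)
    (gm gp : Submodule ℂ g)
    -- g = g_- ⊕ p
    (hsplit : gm ⊔ gp = ⊤)
    (L T N : Submodule ℂ V)
    (hLT : L ⊓ T = ⊥) (hcompl : IsCompl (L ⊔ T) N)
    -- p = g_{≥0} preserves the line L ...
    (hpL : ∀ x ∈ gp, ∀ v ∈ L, ρ x v ∈ L)
    -- ... and preserves L ⊕ T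
    (hpLT : ∀ x ∈ gp, ∀ w ∈ L ⊔ T, ρ x w ∈ L ⊔ T) :
    ∀ ξ : g, ∀ ζ ∈ fubiniKernel ρ gm L T, ⁅ρ ξ, ζ⁆ ∈ fubiniKernel ρ gm L T := by
  intro ξ ζ hζ
  have hmem' : ξ ∈ gm ⊔ gp := by rw [hsplit]; trivial
  rcases Submodule.mem_sup.mp hmem' with ⟨a, ha, b, hb, hab⟩
  have hρ : ρ ξ = ρ a + ρ b := by rw [← hab]; exact ρ.map_add a b
  intro xs hxs v hv
  rw [hρ, add_lie, foldr_lie_add]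
  simp only [LinearMap.add_apply]
  refine (L ⊔ T).add_mem ?_ ?_
  · exact mem_fubiniKernel_lie_of_mem ρ gm L T ha hζ xs hxs v hv
  · exact fubiniKernel_key ρ gm gp hsplit L T hpL hpLT xs hxs b hb ζ hζ v hv
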